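/- Let M be a cancellative commutative monoid whose only invertible element is the identity, and let F be a monoidal functor from the category of cospans of finite sets (morphisms are isomorphism classes of cospans, composition by pushout, tensor by disjoint union) to BM. Then F(c) = 0 for every cospan c. -/

import Mathlib

/-- A cospan of finite sets `X → S ← Y` (the apex `S` is finite). -/
structure Cospan (X Y : Type) where
  S : Type
  finS : Finite S
  i : X → S
  o : Y → S

namespace Cospan

/-- The identity cospan `S → S ← S`. -/
def idC (S : Type) (hS : Finite S) : Cospan S S := ⟨S, hS, id, id⟩

/-- The relation generating the pushout of `S ← Y → S'`. -/
def pushoutRel {Y S S' : Type} (o : Y → S) (i' : Y → S') :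
    (S ⊕ S') → (S ⊕ S') → Prop :=
  fun a b => ∃ y, a = Sum.inl (o y) ∧ b = Sum.inr (i' y)

/-- Composition of cospans by pushout over the shared foot. -/
def comp {X Y Z : Type} (c : Cospan X Y) (d : Cospan Y Z) : Cospan X Z where
  S := Quot (pushoutRel c.o d.i)
  finS := by have := c.finS; have := d.finS; exact Quot.finite _
  i := fun x => Quot.mk _ (Sum.inl (c.i x))
  o := fun z => Quot.mk _ (Sum.inr (d.o z))

/-- Tensor (disjoint union) of cospans. -/
def tensor {X Y X' Y' : Type} (c : Cospan X Y) (d : Cospan X' Y') :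
    Cospan (X ⊕ X') (Y ⊕ Y') where
  S := c.S ⊕ d.S
  finS := by have := c.finS; have := d.finS; infer_instance
  i := Sum.map c.i d.i
  o := Sum.map c.o d.o

/-- Isomorphism of cospans with the same feet: a bijection of apexes
commuting with both legs. -/
structure Iso {X Y : Type} (c d : Cospan X Y) where
  e : c.S ≃ d.S
  hi : ∀ x, e (c.i x) = d.i x
  ho : ∀ y, e (c.o y) = d.o y

/-- The generator `μ = (2 → 1 ← 1)`. -/
def muC : Cospan (Fin 2) (Fin 1) := ⟨Fin 1, inferInstance, fun _ => 0, id⟩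

/-- The generator `δ = (1 → 1 ← 2)`. -/
def deltaC : Cospan (Fin 1) (Fin 2) := ⟨Fin 1, inferInstance, id, fun _ => 0⟩

/-- The boundary cospan `η_n = (0 → n ← n)`. -/
def etaC (n : ℕ) : Cospan PEmpty (Fin n) := ⟨Fin n, inferInstance, PEmpty.elim, id⟩

/-- The boundary cospan `ε_n = (n → n ← 0)`. -/
def epsC (n : ℕ) : Cospan (Fin n) PEmpty := ⟨Fin n, inferInstance, id, PEmpty.elim⟩

end Cospan

open Cospan

/-- Composing a cospan whose output leg is `id` with `d` just precomposes
the input leg of `d`. -/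
def isoCompRight {X T Z : Type} (hT : Finite T) (a : X → T) (d : Cospan T Z) :
    Iso ((Cospan.mk T hT a id).comp d) (Cospan.mk d.S d.finS (d.i ∘ a) d.o) where
  e :=
    { toFun := Quot.lift (Sum.elim d.i id) (by rintro p q ⟨y, rfl, rfl⟩; rfl)
      invFun := fun s => Quot.mk _ (Sum.inr s)
      left_inv := by
        refine Quot.ind ?_
        rintro (t | s)
        · exact (Quot.sound ⟨t, rfl, rfl⟩).symm
        · rfl
      right_inv := fun s => rfl }
  hi := fun x => rfl
  ho := fun z => rfl

/-- Composing `c` with a cospan whose input leg is `id` just precomposes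
the output leg of `c`. -/
def isoCompLeft {X Y Z : Type} (c : Cospan X Y) (hY : Finite Y) (g : Z → Y) :
    Iso (c.comp (Cospan.mk Y hY id g)) (Cospan.mk c.S c.finS c.i (c.o ∘ g)) where
  e :=
    { toFun := Quot.lift (Sum.elim id c.o) (by rintro p q ⟨y, rfl, rfl⟩; rfl)
      invFun := fun s => Quot.mk _ (Sum.inl s)
      left_inv := by
        refine Quot.ind ?_
        rintro (s | y)
        · rfl
        · exact Quot.sound ⟨y, rfl, rfl⟩
      right_inv := fun s => rfl }
  hi := fun x => rfl
  ho := fun z => rfl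

/-- Cospans with empty feet are isomorphic as soon as their apexes are. -/
def isoPE {S S' : Type} (hS : Finite S) (hS' : Finite S') (e : S ≃ S')
    (f g : PEmpty → S) (f' g' : PEmpty → S') :
    Iso (Cospan.mk S hS f g) (Cospan.mk S' hS' f' g') :=
  ⟨e, fun x => x.elim, fun y => y.elim⟩

open Cospan in
/-- If `M` is a cancellative commutative monoid whose only invertible element
is the identity, then every monoidal functor `F` from the category of cospans
of finite sets to `BM` (i.e. every assignment sending identities to `0` and
additive under composition and tensor, invariant under isomorphism of cospans)
vanishes on every cospan. -/
theorem stmt_6 (M : Type*) [AddCancelCommMonoid M]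
    (hunits : ∀ x : M, (∃ y : M, x + y = 0) → x = 0)
    (F : ∀ {X Y : Type} [Finite X] [Finite Y], Cospan X Y → M)
    (hid : ∀ (S : Type) (hS : Finite S), F (idC S hS) = 0)
    (hcomp : ∀ {X Y Z : Type} [Finite X] [Finite Y] [Finite Z]
      (c : Cospan X Y) (d : Cospan Y Z), F (c.comp d) = F c + F d)
    (htensor : ∀ {X Y X' Y' : Type} [Finite X] [Finite Y] [Finite X'] [Finite Y']
      (c : Cospan X Y) (d : Cospan X' Y'), F (c.tensor d) = F c + F d)
    (hiso : ∀ {X Y : Type} [Finite X] [Finite Y] (c d : Cospan X Y),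
      Nonempty (Iso c d) → F c = F d) :
    ∀ {X Y : Type} [Finite X] [Finite Y] (c : Cospan X Y), F c = 0 := by
  have efun : ∀ {W : Type} (u v : PEmpty → W), u = v :=
    fun u v => funext fun x => x.elim
  -- Key composition rule 1: left factor has identity output leg.
  have key1 : ∀ {X T Z : Type} [Finite X] [Finite T] [Finite Z]
      (hT : Finite T) (a : X → T) (d : Cospan T Z),
      F (Cospan.mk T hT a id) + F d = F (Cospan.mk d.S d.finS (d.i ∘ a) d.o) := by
    intro X T Z _ _ _ hT a d
    rw [← hcomp]
    exact hiso _ _ ⟨isoCompRight hT a d⟩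
  -- Key composition rule 2: right factor has identity input leg.
  have key2 : ∀ {X Y Z : Type} [Finite X] [Finite Y] [Finite Z]
      (c : Cospan X Y) (hY : Finite Y) (g : Z → Y),
      F c + F (Cospan.mk Y hY id g) = F (Cospan.mk c.S c.finS c.i (c.o ∘ g)) := by
    intro X Y Z _ _ _ c hY g
    rw [← hcomp]
    exact hiso _ _ ⟨isoCompLeft c hY g⟩
  -- split pairs for "input-leg" cospans
  have hGs : ∀ {X T : Type} [Finite X] [Finite T] (hX : Finite X) (hT : Finite T)
      (q : X → T) (s : T → X), q ∘ s = id →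
      F (Cospan.mk T hT q id) = 0 ∧ F (Cospan.mk X hX s id) = 0 := by
    intro X T _ _ hX hT q s hqs
    have h : F (Cospan.mk X hX s id) + F (Cospan.mk T hT q id)
        = F (Cospan.mk T hT (q ∘ s) id) := key1 hX s (Cospan.mk T hT q id)
    rw [hqs] at h
    have h0 : F (Cospan.mk X hX s id) + F (Cospan.mk T hT q id) = 0 := by
      rw [h]; exact hid T hT
    exact ⟨hunits _ ⟨_, by rw [add_comm]; exact h0⟩, hunits _ ⟨_, h0⟩⟩
  -- split pairs for "output-leg" cospans
  have hHs : ∀ {T Z : Type} [Finite T] [Finite Z] (hT : Finite T) (hZ : Finite Z)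
      (q : Z → T) (s : T → Z), q ∘ s = id →
      F (Cospan.mk T hT id q) = 0 ∧ F (Cospan.mk Z hZ id s) = 0 := by
    intro T Z _ _ hT hZ q s hqs
    have h : F (Cospan.mk T hT id q) + F (Cospan.mk Z hZ id s)
        = F (Cospan.mk T hT id (q ∘ s)) := key2 (Cospan.mk T hT id q) hZ s
    rw [hqs] at h
    have h0 : F (Cospan.mk T hT id q) + F (Cospan.mk Z hZ id s) = 0 := by
      rw [h]; exact hid T hT
    exact ⟨hunits _ ⟨_, h0⟩, hunits _ ⟨_, by rw [add_comm]; exact h0⟩⟩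
  -- input-leg cospans with nonempty source vanish
  have hGne : ∀ {X T : Type} [Finite X] [Finite T] (hX : Finite X) (hT : Finite T)
      [Nonempty X] (f : X → T), F (Cospan.mk T hT f id) = 0 := by
    intro X T _ _ hX hT _ f
    haveI hR : Finite ↥(Set.range f) := inferInstance
    haveI hNR : Nonempty ↥(Set.range f) :=
      ⟨⟨f (Classical.arbitrary X), Set.mem_range_self _⟩⟩
    have hq : Function.Surjective (Set.rangeFactorization f) := Set.rangeFactorization_surjective
    have hqz : F (Cospan.mk ↥(Set.range f) hR (Set.rangeFactorization f) id) = 0 :=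
      (hGs hX hR (Set.rangeFactorization f) (Function.surjInv hq)
        (funext fun b => Function.surjInv_eq hq b)).1
    have hjz : F (Cospan.mk T hT (Subtype.val : ↥(Set.range f) → T) id) = 0 :=
      (hGs hT hR (Function.invFun (Subtype.val : ↥(Set.range f) → T)) Subtype.val
        (funext fun b => Function.leftInverse_invFun Subtype.val_injective b)).2
    have h : F (Cospan.mk ↥(Set.range f) hR (Set.rangeFactorization f) id)
        + F (Cospan.mk T hT (Subtype.val : ↥(Set.range f) → T) id)
        = F (Cospan.mk T hT ((Subtype.val : ↥(Set.range f) → T) ∘ Set.rangeFactorization f) id) :=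
      key1 hR (Set.rangeFactorization f) (Cospan.mk T hT Subtype.val id)
    rw [hqz, hjz, zero_add,
      show ((Subtype.val : ↥(Set.range f) → T) ∘ Set.rangeFactorization f) = f from rfl] at h
    exact h.symm
  -- output-leg cospans with nonempty source vanish
  have hHne : ∀ {T Z : Type} [Finite T] [Finite Z] (hT : Finite T) (hZ : Finite Z)
      [Nonempty Z] (o : Z → T), F (Cospan.mk T hT id o) = 0 := by
    intro T Z _ _ hT hZ _ o
    haveI hR : Finite ↥(Set.range o) := inferInstance
    haveI hNR : Nonempty ↥(Set.range o) :=
      ⟨⟨o (Classical.arbitrary Z), Set.mem_range_self _⟩⟩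
    have hq : Function.Surjective (Set.rangeFactorization o) := Set.rangeFactorization_surjective
    have hqz : F (Cospan.mk ↥(Set.range o) hR id (Set.rangeFactorization o)) = 0 :=
      (hHs hR hZ (Set.rangeFactorization o) (Function.surjInv hq)
        (funext fun b => Function.surjInv_eq hq b)).1
    have hjz : F (Cospan.mk T hT id (Subtype.val : ↥(Set.range o) → T)) = 0 :=
      (hHs hR hT (Function.invFun (Subtype.val : ↥(Set.range o) → T)) Subtype.val
        (funext fun b => Function.leftInverse_invFun Subtype.val_injective b)).2
    have h : F (Cospan.mk T hT id (Subtype.val : ↥(Set.range o) → T))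
        + F (Cospan.mk ↥(Set.range o) hR id (Set.rangeFactorization o))
        = F (Cospan.mk T hT id ((Subtype.val : ↥(Set.range o) → T) ∘ Set.rangeFactorization o)) :=
      key2 (Cospan.mk T hT id Subtype.val) hR (Set.rangeFactorization o)
    rw [hqz, hjz, add_zero,
      show ((Subtype.val : ↥(Set.range o) → T) ∘ Set.rangeFactorization o) = o from rfl] at h
    exact h.symm
  -- closed cospans: transport along apex equivalences
  have hKeq : ∀ {S S' : Type} (hS : Finite S) (hS' : Finite S') (e : S ≃ S')
      (f g : PEmpty → S) (f' g' : PEmpty → S'),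
      F (Cospan.mk S hS f g) = F (Cospan.mk S' hS' f' g') :=
    fun hS hS' e f g f' g' => hiso _ _ ⟨isoPE hS hS' e f g f' g'⟩
  -- an equivalence used to fix up feet of tensors
  let e0 : PEmpty ≃ (PEmpty ⊕ PEmpty) :=
    ⟨PEmpty.elim, Sum.elim PEmpty.elim PEmpty.elim, fun x => x.elim,
      fun s => by cases s with
        | inl a => exact a.elim
        | inr a => exact a.elim⟩
  have hPP : Finite (PEmpty.{1} ⊕ PEmpty.{1}) := inferInstance
  have hPE : Finite PEmpty.{1} := inferInstance
  -- additivity of closed cospans under disjoint union of apexes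
  have hKadd : ∀ {A B : Type} [Finite A] [Finite B] (hA : Finite A) (hB : Finite B)
      (hAB : Finite (A ⊕ B)) (f g : PEmpty → A ⊕ B)
      (fa ga : PEmpty → A) (fb gb : PEmpty → B),
      F (Cospan.mk (A ⊕ B) hAB f g)
        = F (Cospan.mk A hA fa ga) + F (Cospan.mk B hB fb gb) := by
    intro A B _ _ hA hB hAB f g fa ga fb gb
    have hbL : F (Cospan.mk (PEmpty ⊕ PEmpty) hPP (⇑e0) id) = 0 :=
      (hGs hPP hPE (⇑e0.symm) (⇑e0) (funext fun x => e0.symm_apply_apply x)).2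
    have hbR : F (Cospan.mk (PEmpty ⊕ PEmpty) hPP id (⇑e0)) = 0 :=
      (hHs hPP hPE (⇑e0) (⇑e0.symm) (funext fun x => e0.apply_symm_apply x)).1
    have h1 : F (Cospan.mk (PEmpty ⊕ PEmpty) hPP (⇑e0) id)
        + F ((Cospan.mk A hA fa ga).tensor (Cospan.mk B hB fb gb))
        = F (Cospan.mk (A ⊕ B) hAB (Sum.map fa fb ∘ ⇑e0) (Sum.map ga gb)) :=
      key1 hPP (⇑e0) ((Cospan.mk A hA fa ga).tensor (Cospan.mk B hB fb gb))
    have h2 : F (Cospan.mk (A ⊕ B) hAB (Sum.map fa fb ∘ ⇑e0) (Sum.map ga gb))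
        + F (Cospan.mk (PEmpty ⊕ PEmpty) hPP id (⇑e0))
        = F (Cospan.mk (A ⊕ B) hAB (Sum.map fa fb ∘ ⇑e0) (Sum.map ga gb ∘ ⇑e0)) :=
      key2 (Cospan.mk (A ⊕ B) hAB (Sum.map fa fb ∘ ⇑e0) (Sum.map ga gb)) hPP (⇑e0)
    have ht := htensor (Cospan.mk A hA fa ga) (Cospan.mk B hB fb gb)
    rw [efun f (Sum.map fa fb ∘ ⇑e0), efun g (Sum.map ga gb ∘ ⇑e0), ← h2, ← h1,
      ht, hbL, hbR, zero_add, add_zero]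
  have hPU : Finite PUnit.{1} := inferInstance
  have hBo : Finite Bool := inferInstance
  -- the closed cospan over PUnit vanishes
  have hKP : F (Cospan.mk PUnit hPU PEmpty.elim PEmpty.elim) = 0 := by
    have hmu : F (Cospan.mk PUnit hPU (fun _ : Bool => PUnit.unit) id) = 0 :=
      hGne hBo hPU _
    have hdel : F (Cospan.mk PUnit hPU id (fun _ : Bool => PUnit.unit)) = 0 :=
      hHne hPU hBo _
    have h1 : F (Cospan.mk Bool hBo PEmpty.elim id)
        + F (Cospan.mk PUnit hPU (fun _ : Bool => PUnit.unit) id)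
        = F (Cospan.mk PUnit hPU ((fun _ : Bool => PUnit.unit) ∘ PEmpty.elim) id) :=
      key1 hBo PEmpty.elim (Cospan.mk PUnit hPU (fun _ : Bool => PUnit.unit) id)
    have h2 : F (Cospan.mk PUnit hPU id (fun _ : Bool => PUnit.unit))
        + F (Cospan.mk Bool hBo id PEmpty.elim)
        = F (Cospan.mk PUnit hPU id ((fun _ : Bool => PUnit.unit) ∘ PEmpty.elim)) :=
      key2 (Cospan.mk PUnit hPU id (fun _ : Bool => PUnit.unit)) hBo PEmpty.elim
    have h3 : F (Cospan.mk PUnit hPU ((fun _ : Bool => PUnit.unit) ∘ PEmpty.elim) id)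
        + F (Cospan.mk PUnit hPU id ((fun _ : Bool => PUnit.unit) ∘ PEmpty.elim))
        = F (Cospan.mk PUnit hPU (id ∘ ((fun _ : Bool => PUnit.unit) ∘ PEmpty.elim))
            ((fun _ : Bool => PUnit.unit) ∘ PEmpty.elim)) :=
      key1 hPU ((fun _ : Bool => PUnit.unit) ∘ PEmpty.elim)
        (Cospan.mk PUnit hPU id ((fun _ : Bool => PUnit.unit) ∘ PEmpty.elim))
    have h4 : F (Cospan.mk Bool hBo PEmpty.elim id)
        + F (Cospan.mk Bool hBo id PEmpty.elim)
        = F (Cospan.mk Bool hBo (id ∘ PEmpty.elim) PEmpty.elim) :=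
      key1 hBo PEmpty.elim (Cospan.mk Bool hBo id PEmpty.elim)
    have h5 : F (Cospan.mk Bool hBo (id ∘ PEmpty.elim) PEmpty.elim)
        = F (Cospan.mk (PUnit ⊕ PUnit) inferInstance PEmpty.elim PEmpty.elim) :=
      hKeq hBo inferInstance Equiv.boolEquivPUnitSumPUnit _ _ _ _
    have h6 : F (Cospan.mk (PUnit ⊕ PUnit) inferInstance PEmpty.elim PEmpty.elim)
        = F (Cospan.mk PUnit hPU PEmpty.elim PEmpty.elim)
        + F (Cospan.mk PUnit hPU PEmpty.elim PEmpty.elim) :=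
      hKadd hPU hPU inferInstance _ _ _ _ _ _
    rw [hmu, add_zero] at h1
    rw [hdel, zero_add] at h2
    rw [← h1, ← h2, h4, h5, h6] at h3
    -- h3 : k = k + k
    exact (add_left_cancel (a := F (Cospan.mk PUnit hPU PEmpty.elim PEmpty.elim))
      (by rw [add_zero]; exact h3.symm) : (0 : M) = _).symm
  -- all closed cospans vanish
  have hK : ∀ (S : Type) (hS : Finite S) (f g : PEmpty → S),
      F (Cospan.mk S hS f g) = 0 := by
    intro S hS
    haveI := hS
    refine Finite.induction_empty_option
      (P := fun T => ∀ (hT : Finite T) (f g : PEmpty → T), F (Cospan.mk T hT f g) = 0)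
      ?_ ?_ ?_ S hS
    · intro α β e hα hβ f g
      haveI := hβ
      have hFa : Finite α := Finite.of_equiv β e.symm
      rw [hKeq hβ hFa e.symm f g PEmpty.elim PEmpty.elim]
      exact hα hFa _ _
    · intro hP f g
      rw [hKeq hP inferInstance (Equiv.refl PEmpty) f g id id]
      exact hid PEmpty inferInstance
    · intro α hFT hIH hO f g
      haveI := hFT
      haveI hA : Finite α := Finite.of_fintype α
      rw [hKeq hO (inferInstance : Finite (α ⊕ PUnit)) (Equiv.optionEquivSumPUnit α)
        f g PEmpty.elim PEmpty.elim]
      rw [hKadd hA hPU inferInstance PEmpty.elim PEmpty.elim PEmpty.elim PEmpty.elim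
        PEmpty.elim PEmpty.elim]
      rw [hIH hA PEmpty.elim PEmpty.elim, hKP, add_zero]
  -- input-leg cospans with empty source vanish
  have hGempty : ∀ {X S : Type} [Finite X] [Finite S] (hX : Finite X) (hS : Finite S)
      (hXe : IsEmpty X) (f : X → S), F (Cospan.mk S hS f id) = 0 := by
    intro X S _ _ hX hS hXe f
    have eX : PEmpty ≃ X := (Equiv.equivPEmpty X).symm
    have hbL : F (Cospan.mk X hX (⇑eX) id) = 0 :=
      (hGs hX hPE (⇑eX.symm) (⇑eX) (funext fun x => eX.symm_apply_apply x)).2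
    have h1 : F (Cospan.mk X hX (⇑eX) id) + F (Cospan.mk S hS (id ∘ f) PEmpty.elim)
        = F (Cospan.mk S hS ((id ∘ f) ∘ ⇑eX) PEmpty.elim) :=
      key1 hX (⇑eX) (Cospan.mk S hS (id ∘ f) PEmpty.elim)
    have h2 : F (Cospan.mk S hS f id) + F (Cospan.mk S hS id PEmpty.elim)
        = F (Cospan.mk S hS (id ∘ f) PEmpty.elim) :=
      key1 hS f (Cospan.mk S hS id PEmpty.elim)
    rw [hbL, zero_add, hK S hS ((id ∘ f) ∘ ⇑eX) PEmpty.elim] at h1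
    rw [h1] at h2
    exact hunits _ ⟨_, h2⟩
  -- output-leg cospans with empty source vanish
  have hHempty : ∀ {Y S : Type} [Finite Y] [Finite S] (hY : Finite Y) (hS : Finite S)
      (hYe : IsEmpty Y) (o : Y → S), F (Cospan.mk S hS id o) = 0 := by
    intro Y S _ _ hY hS hYe o
    have eY : PEmpty ≃ Y := (Equiv.equivPEmpty Y).symm
    have h1 : F (Cospan.mk S hS PEmpty.elim id) + F (Cospan.mk S hS id o)
        = F (Cospan.mk S hS (id ∘ PEmpty.elim) o) :=
      key1 hS PEmpty.elim (Cospan.mk S hS id o)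
    have hbR : F (Cospan.mk Y hY id (⇑eY)) = 0 :=
      (hHs hY hPE (⇑eY) (⇑eY.symm) (funext fun y => eY.apply_symm_apply y)).1
    have h2 : F (Cospan.mk S hS (id ∘ PEmpty.elim) o) + F (Cospan.mk Y hY id (⇑eY))
        = F (Cospan.mk S hS (id ∘ PEmpty.elim) (o ∘ ⇑eY)) :=
      key2 (Cospan.mk S hS (id ∘ PEmpty.elim) o) hY (⇑eY)
    rw [hbR, add_zero, hK S hS (id ∘ PEmpty.elim) (o ∘ ⇑eY)] at h2
    rw [hGempty hPE hS inferInstance PEmpty.elim, zero_add, h2] at h1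
    exact h1
  -- all input-leg cospans vanish
  have hGall : ∀ {X S : Type} [Finite X] [Finite S] (hX : Finite X) (hS : Finite S)
      (f : X → S), F (Cospan.mk S hS f id) = 0 := by
    intro X S _ _ hX hS f
    rcases isEmpty_or_nonempty X with h | h
    · exact hGempty hX hS h f
    · exact hGne hX hS f
  -- all output-leg cospans vanish
  have hHall : ∀ {Y S : Type} [Finite Y] [Finite S] (hY : Finite Y) (hS : Finite S)
      (o : Y → S), F (Cospan.mk S hS id o) = 0 := by
    intro Y S _ _ hY hS o
    rcases isEmpty_or_nonempty Y with h | h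
    · exact hHempty hY hS h o
    · exact hHne hS hY o
  -- assemble
  intro X Y hX hY c
  obtain ⟨S, hS, i, o⟩ := c
  have h : F (Cospan.mk S hS i id) + F (Cospan.mk S hS id o)
      = F (Cospan.mk S hS (id ∘ i) o) := key1 hS i (Cospan.mk S hS id o)
  rw [hGall hX hS i, hHall hY hS o, add_zero, Function.id_comp] at h
  exact h.symm
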